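/- Let H be an ordered graph and F a minimal ordered Ramsey graph of H. Then there exists a red/blue coloring of the edges of F such that every monochromatic ordered copy of H in F contains the leftmost vertex of F, and likewise a coloring such that every monochromatic copy contains the rightmost vertex of F. Consequently, if H and H' are ordered graphs with the same set of ordered Ramsey graphs and H is an ordered subgraph of H', then every ordered copy of H in H' contains both the leftmost and the rightmost vertex of H'. -/

import Mathlib

/-- An order-preserving copy of the ordered graph `H` in the ordered graph `F`. -/
def OrdCopy {m n : ℕ} (H : SimpleGraph (Fin m)) (F : SimpleGraph (Fin n))
    (f : Fin m → Fin n) : Prop :=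
  StrictMono f ∧ ∀ u v, H.Adj u v → F.Adj (f u) (f v)

/-- `F → (H, H')` for ordered graphs. -/
def OrdArrows {m m' n : ℕ} (F : SimpleGraph (Fin n))
    (H : SimpleGraph (Fin m)) (H' : SimpleGraph (Fin m')) : Prop :=
  ∀ c : Sym2 (Fin n) → Bool,
    (∃ f, OrdCopy H F f ∧ ∀ u v, H.Adj u v → c s(f u, f v) = true) ∨
    (∃ g, OrdCopy H' F g ∧ ∀ u v, H'.Adj u v → c s(g u, g v) = false)

/-- `F'` is (isomorphic to) an ordered subgraph of `F`. -/
def IsOrdSubgraph {k n : ℕ} (F' : SimpleGraph (Fin k)) (F : SimpleGraph (Fin n)) : Prop :=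
  ∃ φ : Fin k → Fin n, StrictMono φ ∧ ∀ u v, F'.Adj u v → F.Adj (φ u) (φ v)

/-- `F` is a minimal ordered Ramsey graph of `(H, H')`. -/
def MinimalOrdRamsey {m m' n : ℕ} (F : SimpleGraph (Fin n))
    (H : SimpleGraph (Fin m)) (H' : SimpleGraph (Fin m')) : Prop :=
  OrdArrows F H H' ∧ ∀ (k : ℕ) (F' : SimpleGraph (Fin k)),
    IsOrdSubgraph F' F → ¬ IsOrdSubgraph F F' → ¬ OrdArrows F' H H'

/-- Finite Ramsey theorem, finset version. -/
lemma ramsey_finset (a b : ℕ) : ∃ N : ℕ, ∀ (α : Type) [DecidableEq α] (s : Finset α)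
    (c : Sym2 α → Bool), N ≤ s.card →
    (∃ t ⊆ s, t.card = a ∧ ∀ u ∈ t, ∀ v ∈ t, u ≠ v → c s(u, v) = true) ∨
    (∃ t ⊆ s, t.card = b ∧ ∀ u ∈ t, ∀ v ∈ t, u ≠ v → c s(u, v) = false) := by
  induction a generalizing b with
  | zero => exact ⟨0, fun α _ s c _ => Or.inl ⟨∅, Finset.empty_subset s, rfl, by simp⟩⟩
  | succ a iha =>
    induction b with
    | zero => exact ⟨0, fun α _ s c _ => Or.inr ⟨∅, Finset.empty_subset s, rfl, by simp⟩⟩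
    | succ b ihb =>
      obtain ⟨N₁, h₁⟩ := iha (b + 1)
      obtain ⟨N₂, h₂⟩ := ihb
      refine ⟨N₁ + N₂ + 1, fun α _ s c hs => ?_⟩
      obtain ⟨x, hx⟩ : ∃ x, x ∈ s := Finset.card_pos.mp (by omega)
      classical
      set A := (s.erase x).filter (fun y => c s(x, y) = true) with hA
      set B := (s.erase x).filter (fun y => ¬ (c s(x, y) = true)) with hB
      have hcard : A.card + B.card = (s.erase x).card := Finset.card_filter_add_card_filter_not _
      have hxe : (s.erase x).card = s.card - 1 := Finset.card_erase_of_mem hx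
      have hAs : A ⊆ s.erase x := Finset.filter_subset _ _
      have hBs : B ⊆ s.erase x := Finset.filter_subset _ _
      rcases le_or_gt N₁ A.card with hAc | hAc
      · rcases h₁ α A c hAc with ⟨t, hts, htc, htm⟩ | ⟨t, hts, htc, htm⟩
        · -- true a-clique in A; insert x
          have hxt : x ∉ t := fun h => Finset.notMem_erase x s (hAs (hts h))
          refine Or.inl ⟨insert x t, ?_, ?_, ?_⟩
          · intro y hy
            rcases Finset.mem_insert.mp hy with rfl | hy
            · exact hx
            · exact Finset.erase_subset x s (hAs (hts hy))
          · rw [Finset.card_insert_of_notMem hxt, htc]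
          · intro u hu v hv huv
            have key : ∀ y ∈ t, c s(x, y) = true :=
              fun y hy => (Finset.mem_filter.mp (hts hy)).2
            rcases Finset.mem_insert.mp hu with hux | hut <;>
              rcases Finset.mem_insert.mp hv with hvx | hvt
            · exact absurd (hux.trans hvx.symm) huv
            · subst hux; exact key v hvt
            · subst hvx; rw [Sym2.eq_swap]; exact key u hut
            · exact htm u hut v hvt huv
        · exact Or.inr ⟨t, hts.trans (hAs.trans (Finset.erase_subset x s)), htc, htm⟩
      · have hBc : N₂ ≤ B.card := by omega
        rcases h₂ α B c hBc with ⟨t, hts, htc, htm⟩ | ⟨t, hts, htc, htm⟩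
        · exact Or.inl ⟨t, hts.trans (hBs.trans (Finset.erase_subset x s)), htc, htm⟩
        · have hxt : x ∉ t := fun h => Finset.notMem_erase x s (hBs (hts h))
          refine Or.inr ⟨insert x t, ?_, ?_, ?_⟩
          · intro y hy
            rcases Finset.mem_insert.mp hy with rfl | hy
            · exact hx
            · exact Finset.erase_subset x s (hBs (hts hy))
          · rw [Finset.card_insert_of_notMem hxt, htc]
          · intro u hu v hv huv
            have key : ∀ y ∈ t, c s(x, y) = false := by
              intro y hy
              have h' := (Finset.mem_filter.mp (hts hy)).2
              simpa using h'
            rcases Finset.mem_insert.mp hu with hux | hut <;>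
              rcases Finset.mem_insert.mp hv with hvx | hvt
            · exact absurd (hux.trans hvx.symm) huv
            · subst hux; exact key v hvt
            · subst hvx; rw [Sym2.eq_swap]; exact key u hut
            · exact htm u hut v hvt huv

/-- The complete ordered graph on enough vertices arrows any ordered graph. -/
lemma exists_arrows (m' : ℕ) (H' : SimpleGraph (Fin m')) :
    ∃ (N : ℕ) (F : SimpleGraph (Fin N)), OrdArrows F H' H' := by
  obtain ⟨N, hN⟩ := ramsey_finset m' m'
  refine ⟨N, ⊤, fun c => ?_⟩
  have := hN (Fin N) Finset.univ c (by simp)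
  rcases this with ⟨t, _, htc, htm⟩ | ⟨t, _, htc, htm⟩
  · refine Or.inl ⟨t.orderEmbOfFin htc, ⟨(t.orderEmbOfFin htc).strictMono, ?_⟩, ?_⟩
    · intro u v huv
      exact SimpleGraph.top_adj _ _ |>.mpr
        (fun h => huv.ne ((t.orderEmbOfFin htc).injective h))
    · intro u v huv
      exact htm _ (t.orderEmbOfFin_mem htc u) _ (t.orderEmbOfFin_mem htc v)
        (fun h => huv.ne ((t.orderEmbOfFin htc).injective h))
  · refine Or.inr ⟨t.orderEmbOfFin htc, ⟨(t.orderEmbOfFin htc).strictMono, ?_⟩, ?_⟩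
    · intro u v huv
      exact SimpleGraph.top_adj _ _ |>.mpr
        (fun h => huv.ne ((t.orderEmbOfFin htc).injective h))
    · intro u v huv
      exact htm _ (t.orderEmbOfFin_mem htc u) _ (t.orderEmbOfFin_mem htc v)
        (fun h => huv.ne ((t.orderEmbOfFin htc).injective h))

/-- the measure strictly decreases for proper ordered subgraphs. -/
lemma measure_lt {k n : ℕ} {F' : SimpleGraph (Fin k)} {F : SimpleGraph (Fin n)}
    (h1 : IsOrdSubgraph F' F) (h2 : ¬ IsOrdSubgraph F F') :
    k + F'.edgeSet.ncard < n + F.edgeSet.ncard := by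
  obtain ⟨φ, hφ, hadj⟩ := h1
  have hEle : F'.edgeSet.ncard ≤ F.edgeSet.ncard := by
    have himg : Sym2.map φ '' F'.edgeSet ⊆ F.edgeSet := by
      rintro e ⟨e', he', rfl⟩
      induction e' with
      | h u v => exact hadj u v he'
    calc F'.edgeSet.ncard = (Sym2.map φ '' F'.edgeSet).ncard :=
          (Set.ncard_image_of_injective _ (Sym2.map.injective hφ.injective)).symm
      _ ≤ F.edgeSet.ncard := Set.ncard_le_ncard himg (Set.toFinite _)
  have hkn : k ≤ n := by
    have := Fintype.card_le_of_injective φ hφ.injective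
    simpa using this
  rcases Nat.lt_or_ge k n with h | h
  · omega
  · have hkn' : k = n := le_antisymm hkn h
    subst hkn'
    -- φ = id
    have hsurj : Function.Surjective φ := Finite.injective_iff_surjective.mp hφ.injective
    have hid : φ = id := by
      have inst : WellFoundedLT (Fin k) := inferInstance
      refine (@StrictMono.range_inj (Fin k) (Fin k) _ _ inst φ id hφ strictMono_id).1 ?_
      rw [Set.range_id, Set.range_eq_univ.mpr hsurj]
    subst hid
    have hle : F' ≤ F := fun u v h => hadj u v h
    have hne : ¬ (F ≤ F') := fun h => h2 ⟨id, strictMono_id, fun u v huv => h huv⟩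
    have hss : F'.edgeSet ⊂ F.edgeSet := by
      refine ⟨SimpleGraph.edgeSet_mono hle, fun h => hne ?_⟩
      intro u v huv
      exact (h (F.mem_edgeSet.mpr huv) : _)
    have := Set.ncard_lt_ncard hss (Set.toFinite _)
    omega

lemma exists_minimal {m m' : ℕ} (H : SimpleGraph (Fin m)) (H' : SimpleGraph (Fin m'))
    (h : ∃ (n : ℕ) (F : SimpleGraph (Fin n)), OrdArrows F H H') :
    ∃ (n : ℕ) (F : SimpleGraph (Fin n)), MinimalOrdRamsey F H H' := by
  obtain ⟨n, F, hF⟩ := h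
  have key : ∀ (N n : ℕ) (F : SimpleGraph (Fin n)), n + F.edgeSet.ncard ≤ N →
      OrdArrows F H H' → ∃ (k : ℕ) (G : SimpleGraph (Fin k)), MinimalOrdRamsey G H H' := by
    intro N
    induction N with
    | zero =>
      intro n F hle harr
      refine ⟨n, F, harr, fun k F' hsub hnsub harr' => ?_⟩
      exact absurd (measure_lt hsub hnsub) (by omega)
    | succ N ih =>
      intro n F hle harr
      by_cases hmin : ∀ (k : ℕ) (F' : SimpleGraph (Fin k)),
          IsOrdSubgraph F' F → ¬ IsOrdSubgraph F F' → ¬ OrdArrows F' H H'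
      · exact ⟨n, F, harr, hmin⟩
      · push_neg at hmin
        obtain ⟨k, F', hsub, hnsub, harr'⟩ := hmin
        exact ih k F' (by have := measure_lt hsub hnsub; omega) harr'
  exact key (n + F.edgeSet.ncard) n F le_rfl hF

/-- Key lemma: a coloring of minimal F such that monochromatic copies hit `v`,
given a deleted-vertex embedding/retraction pair. -/
lemma color_hits {m n : ℕ} {H : SimpleGraph (Fin m)} {F : SimpleGraph (Fin n)}
    (hmin : MinimalOrdRamsey F H H) (v : Fin n)
    (φ : Fin (n - 1) → Fin n) (hφ : StrictMono φ) (ψ : Fin n → Fin (n - 1))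
    (hψ : ∀ x : Fin n, x ≠ v → φ (ψ x) = x) :
    ∃ c : Sym2 (Fin n) → Bool, ∀ f : Fin m → Fin n, OrdCopy H F f →
      (∃ b, ∀ u v', H.Adj u v' → c s(f u, f v') = b) → ∃ w, f w = v := by
  classical
  have hn : 0 < n := v.pos
  set FL : SimpleGraph (Fin (n - 1)) := F.comap φ with hFL
  have hsub : IsOrdSubgraph FL F := ⟨φ, hφ, fun u w h => h⟩
  have hnsub : ¬ IsOrdSubgraph F FL := by
    rintro ⟨χ, hχ, -⟩
    have := Fintype.card_le_of_injective χ hχ.injective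
    simp only [Fintype.card_fin] at this
    omega
  have hnarr : ¬ OrdArrows FL H H := hmin.2 _ FL hsub hnsub
  rw [OrdArrows] at hnarr
  push_neg at hnarr
  obtain ⟨c', hc1, hc2⟩ := hnarr
  refine ⟨fun e => if v ∈ e then true else c' (Sym2.map ψ e), ?_⟩
  intro f hf hmono
  by_contra hno
  push_neg at hno
  obtain ⟨b, hb⟩ := hmono
  set g : Fin m → Fin (n - 1) := fun u => ψ (f u) with hg
  have hfg : ∀ u, φ (g u) = f u := fun u => hψ (f u) (hno u)
  have hgmono : StrictMono g := by
    intro u w huw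
    have h1 : φ (g u) < φ (g w) := by rw [hfg, hfg]; exact hf.1 huw
    exact hφ.lt_iff_lt.mp h1
  have hgcopy : OrdCopy H FL g := by
    refine ⟨hgmono, fun u w h => ?_⟩
    show F.Adj (φ (g u)) (φ (g w))
    rw [hfg, hfg]
    exact hf.2 u w h
  have hcol : ∀ u w, H.Adj u w → c' s(g u, g w) = b := by
    intro u w h
    have h0 : (if v ∈ s(f u, f w) then true else c' (Sym2.map ψ s(f u, f w))) = b :=
      hb u w h
    have hvn : v ∉ s(f u, f w) := by
      rw [Sym2.mem_iff]
      push_neg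
      exact ⟨fun h' => hno u h'.symm, fun h' => hno w h'.symm⟩
    rw [if_neg hvn, Sym2.map_pair_eq] at h0
    exact h0
  cases b with
  | true =>
    obtain ⟨u, w, hadj, hne⟩ := hc1 g hgcopy
    exact hne (hcol u w hadj)
  | false =>
    obtain ⟨u, w, hadj, hne⟩ := hc2 g hgcopy
    exact hne (hcol u w hadj)

lemma m_pos {m n : ℕ} {H : SimpleGraph (Fin m)} {F : SimpleGraph (Fin n)}
    (hn : 0 < n) (hmin : MinimalOrdRamsey F H H) : 0 < m := by
  by_contra hm
  obtain rfl : m = 0 := by omega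
  have hsub : IsOrdSubgraph (⊥ : SimpleGraph (Fin 0)) F :=
    ⟨Fin.elim0, fun a => a.elim0, fun a => a.elim0⟩
  have hnsub : ¬ IsOrdSubgraph F (⊥ : SimpleGraph (Fin 0)) := by
    rintro ⟨χ, -, -⟩
    exact (χ ⟨0, hn⟩).elim0
  have harr : OrdArrows (⊥ : SimpleGraph (Fin 0)) H H := by
    intro c
    exact Or.inl ⟨Fin.elim0, ⟨fun a => a.elim0, fun a => a.elim0⟩, fun a => a.elim0⟩
  exact hmin.2 0 ⊥ hsub hnsub harr

/-- Part (1) as a standalone lemma. -/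
lemma part_one {m n : ℕ} (H : SimpleGraph (Fin m)) (F : SimpleGraph (Fin n)) (hn : 0 < n)
    (hmin : MinimalOrdRamsey F H H) :
    (∃ c : Sym2 (Fin n) → Bool, ∀ f : Fin m → Fin n, OrdCopy H F f →
        (∃ b, ∀ u v, H.Adj u v → c s(f u, f v) = b) → ∃ w, f w = ⟨0, hn⟩) ∧
    (∃ c : Sym2 (Fin n) → Bool, ∀ f : Fin m → Fin n, OrdCopy H F f →
        (∃ b, ∀ u v, H.Adj u v → c s(f u, f v) = b) →
          ∃ w, f w = ⟨n - 1, Nat.sub_lt hn Nat.one_pos⟩) := by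
  have hm : 0 < m := m_pos hn hmin
  rcases eq_or_lt_of_le (Nat.succ_le_of_lt hn) with h1 | h2
  · -- n = 1
    obtain rfl : n = 1 := h1.symm
    constructor
    · exact ⟨fun _ => true, fun f _ _ => ⟨⟨0, hm⟩, Subsingleton.elim _ _⟩⟩
    · exact ⟨fun _ => true, fun f _ _ => ⟨⟨0, hm⟩, Subsingleton.elim _ _⟩⟩
  · -- n ≥ 2
    have hn2 : 2 ≤ n := h2
    constructor
    · refine color_hits hmin ⟨0, hn⟩ (fun i => ⟨i.val + 1, by omega⟩) ?_
        (fun x => ⟨x.val - 1, by omega⟩) ?_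
      · intro i j hij
        simp only [Fin.mk_lt_mk]
        have := (Fin.lt_iff_val_lt_val.mp hij)
        omega
      · intro x hx
        have : x.val ≠ 0 := fun h => hx (Fin.ext h)
        apply Fin.ext
        simp only []
        omega
    · refine color_hits hmin ⟨n - 1, Nat.sub_lt hn Nat.one_pos⟩
        (fun i => ⟨i.val, by omega⟩) ?_
        (fun x => ⟨min x.val (n - 2), by omega⟩) ?_
      · intro i j hij
        simp only [Fin.mk_lt_mk]
        exact Fin.lt_iff_val_lt_val.mp hij
      · intro x hx
        have hxv : x.val ≠ n - 1 := fun h => hx (Fin.ext h)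
        have : x.val < n := x.isLt
        apply Fin.ext
        simp only []
        omega

/-- (1) If `F` is a minimal ordered Ramsey graph of `H`, then there is a coloring of `F`
such that every monochromatic ordered copy of `H` contains the leftmost vertex of `F`, and
likewise one for the rightmost vertex. (2) Consequently, if `H` and `H'` have the same set
of ordered Ramsey graphs and `H` is an ordered subgraph of `H'`, then every ordered copy of
`H` in `H'` contains both the leftmost and the rightmost vertex of `H'`. -/
theorem stmt19 :
    (∀ (m n : ℕ) (H : SimpleGraph (Fin m)) (F : SimpleGraph (Fin n)) (hn : 0 < n),
      MinimalOrdRamsey F H H →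
      ((∃ c : Sym2 (Fin n) → Bool, ∀ f : Fin m → Fin n, OrdCopy H F f →
          (∃ b, ∀ u v, H.Adj u v → c s(f u, f v) = b) → ∃ w, f w = ⟨0, hn⟩) ∧
       (∃ c : Sym2 (Fin n) → Bool, ∀ f : Fin m → Fin n, OrdCopy H F f →
          (∃ b, ∀ u v, H.Adj u v → c s(f u, f v) = b) →
            ∃ w, f w = ⟨n - 1, Nat.sub_lt hn Nat.one_pos⟩))) ∧
    (∀ (m m' : ℕ) (H : SimpleGraph (Fin m)) (H' : SimpleGraph (Fin m')) (hm' : 0 < m'),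
      (∀ (n : ℕ) (F : SimpleGraph (Fin n)), OrdArrows F H H ↔ OrdArrows F H' H') →
      (∃ φ, OrdCopy H H' φ) →
      ∀ f : Fin m → Fin m', OrdCopy H H' f →
        (∃ w, f w = ⟨0, hm'⟩) ∧ (∃ w, f w = ⟨m' - 1, Nat.sub_lt hm' Nat.one_pos⟩)) := by
  constructor
  · intro m n H F hn hmin
    exact part_one H F hn hmin
  · intro m m' H H' hm' hiff hcopy f hf
    -- get a minimal Ramsey graph of H
    obtain ⟨N, F0, hF0⟩ := exists_arrows m' H'
    have hF0' : OrdArrows F0 H H := (hiff N F0).mpr hF0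
    obtain ⟨nF, F, hFmin⟩ := exists_minimal H H ⟨N, F0, hF0'⟩
    have hFarr' : OrdArrows F H' H' := (hiff nF F).mp hFmin.1
    -- nF > 0
    have hnF : 0 < nF := by
      rcases hFarr' (fun _ => true) with ⟨g, _, _⟩ | ⟨g, _, _⟩ <;>
        exact (g ⟨0, hm'⟩).pos
    obtain ⟨⟨cL, hcL⟩, ⟨cR, hcR⟩⟩ := part_one H F hnF hFmin
    -- a helper to extract a monochromatic copy of H'
    have extract : ∀ c : Sym2 (Fin nF) → Bool, ∃ g b, OrdCopy H' F g ∧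
        ∀ u v, H'.Adj u v → c s(g u, g v) = b := by
      intro c
      rcases hFarr' c with ⟨g, hg, hgc⟩ | ⟨g, hg, hgc⟩
      · exact ⟨g, true, hg, hgc⟩
      · exact ⟨g, false, hg, hgc⟩
    constructor
    · obtain ⟨g, b, hg, hgc⟩ := extract cL
      have hcomp : OrdCopy H F (g ∘ f) :=
        ⟨hg.1.comp hf.1, fun u v h => hg.2 _ _ (hf.2 u v h)⟩
      obtain ⟨w, hw⟩ := hcL (g ∘ f) hcomp ⟨b, fun u v h => hgc _ _ (hf.2 u v h)⟩
      refine ⟨w, ?_⟩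
      by_contra hne
      have h0 : (⟨0, hm'⟩ : Fin m') < f w := by
        rw [Fin.lt_iff_val_lt_val]
        have h2 : (f w).val ≠ 0 := fun h => hne (Fin.ext h)
        simp only []
        omega
      have h5 := hg.1 h0
      have hw' : g (f w) = ⟨0, hnF⟩ := hw
      rw [hw'] at h5
      have h6 : (g ⟨0, hm'⟩).val < 0 := h5
      omega
    · obtain ⟨g, b, hg, hgc⟩ := extract cR
      have hcomp : OrdCopy H F (g ∘ f) :=
        ⟨hg.1.comp hf.1, fun u v h => hg.2 _ _ (hf.2 u v h)⟩
      obtain ⟨w, hw⟩ := hcR (g ∘ f) hcomp ⟨b, fun u v h => hgc _ _ (hf.2 u v h)⟩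
      refine ⟨w, ?_⟩
      by_contra hne
      have h0 : f w < (⟨m' - 1, Nat.sub_lt hm' Nat.one_pos⟩ : Fin m') := by
        rw [Fin.lt_iff_val_lt_val]
        have h1 : (f w).val < m' := (f w).isLt
        have h2 : (f w).val ≠ m' - 1 := fun h => hne (Fin.ext h)
        simp only []
        omega
      have h5 := hg.1 h0
      have hw' : g (f w) = ⟨nF - 1, Nat.sub_lt hnF Nat.one_pos⟩ := hw
      rw [hw'] at h5
      have h3 := (g ⟨m' - 1, Nat.sub_lt hm' Nat.one_pos⟩).isLt
      have h6 : nF - 1 < (g ⟨m' - 1, Nat.sub_lt hm' Nat.one_pos⟩).val := h5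
      omega
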